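/- arXiv:1609.06067 — 4 statements merged into one kernel-verified Lean document; each statement's English description precedes it below -/
import Mathlib

section
/- Let R be a commutative ring with an endomorphism φ, and suppose R decomposes as a direct sum R = ⊕_{i=0}^{p-1} u^i · φ(R) for a fixed unit u ∈ R. Define ψ : R → R by ψ(Σ_{i=0}^{p-1} u^i φ(x_i)) = x_0. If 0 → D' → D → D'' → 0 is a short exact sequence of free R-modules each equipped with a semilinear Frobenius φ such that the linearization φ* is an isomorphism (so ψ is defined on each by the same formula), then the induced sequence 0 → D'^{ψ=0} → D^{ψ=0} → D''^{ψ=0} → 0 is exact. -/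
/-- Let `R` be a commutative ring with endomorphism `φ` decomposing as
`R = ⊕_{i=0}^{p−1} u^i·φ(R)` for a unit `u`, and let `ψ` be defined by
`ψ(Σ u^i φ(x_i)) = x₀`.  If `0 → D' → D → D'' → 0` is a short exact sequence of free
`R`-modules with semilinear Frobenii whose linearizations are isomorphisms (encoded by the
unique `φ`-decompositions `hd₁, hd₂, hd₃`, which also define `ψ` on each module), then
`0 → D'^{ψ=0} → D^{ψ=0} → D''^{ψ=0} → 0` is exact. -/
theorem stmt_0 {R : Type*} [CommRing R] (p : ℕ) (hp : p.Prime)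
    (φR : R →+* R) (u : Rˣ)
    (hdecR : ∀ r : R, ∃! c : Fin p → R, r = ∑ i : Fin p, (u : R) ^ (i : ℕ) * φR (c i))
    {M₁ M₂ M₃ : Type*}
    [AddCommGroup M₁] [Module R M₁] [Module.Free R M₁] [Module.Finite R M₁]
    [AddCommGroup M₂] [Module R M₂] [Module.Free R M₂] [Module.Finite R M₂]
    [AddCommGroup M₃] [Module R M₃] [Module.Free R M₃] [Module.Finite R M₃]
    (φ₁ : M₁ →+ M₁) (φ₂ : M₂ →+ M₂) (φ₃ : M₃ →+ M₃)
    (hs₁ : ∀ (r : R) (x : M₁), φ₁ (r • x) = φR r • φ₁ x)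
    (hs₂ : ∀ (r : R) (x : M₂), φ₂ (r • x) = φR r • φ₂ x)
    (hs₃ : ∀ (r : R) (x : M₃), φ₃ (r • x) = φR r • φ₃ x)
    (hd₁ : ∀ x : M₁, ∃! c : Fin p → M₁, x = ∑ i : Fin p, ((u : R) ^ (i : ℕ)) • φ₁ (c i))
    (hd₂ : ∀ x : M₂, ∃! c : Fin p → M₂, x = ∑ i : Fin p, ((u : R) ^ (i : ℕ)) • φ₂ (c i))
    (hd₃ : ∀ x : M₃, ∃! c : Fin p → M₃, x = ∑ i : Fin p, ((u : R) ^ (i : ℕ)) • φ₃ (c i))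
    (ψ₁ : M₁ →+ M₁) (ψ₂ : M₂ →+ M₂) (ψ₃ : M₃ →+ M₃)
    (hψ₁ : ∀ c : Fin p → M₁, ψ₁ (∑ i : Fin p, ((u : R) ^ (i : ℕ)) • φ₁ (c i)) = c ⟨0, hp.pos⟩)
    (hψ₂ : ∀ c : Fin p → M₂, ψ₂ (∑ i : Fin p, ((u : R) ^ (i : ℕ)) • φ₂ (c i)) = c ⟨0, hp.pos⟩)
    (hψ₃ : ∀ c : Fin p → M₃, ψ₃ (∑ i : Fin p, ((u : R) ^ (i : ℕ)) • φ₃ (c i)) = c ⟨0, hp.pos⟩)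
    (f : M₁ →ₗ[R] M₂) (g : M₂ →ₗ[R] M₃)
    (hfφ : ∀ x : M₁, f (φ₁ x) = φ₂ (f x)) (hgφ : ∀ y : M₂, g (φ₂ y) = φ₃ (g y))
    (hfinj : Function.Injective f) (hgsurj : Function.Surjective g)
    (hexact : ∀ y : M₂, g y = 0 ↔ ∃ x : M₁, f x = y) :
    -- exactness of 0 → D'^{ψ=0} → D^{ψ=0} → D''^{ψ=0} → 0
    (∀ x : M₁, ψ₁ x = 0 → f x = 0 → x = 0) ∧
    (∀ y : M₂, ψ₂ y = 0 → g y = 0 → ∃ x : M₁, ψ₁ x = 0 ∧ f x = y) ∧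
    (∀ z : M₃, ψ₃ z = 0 → ∃ y : M₂, ψ₂ y = 0 ∧ g y = z) := by
  set i0 : Fin p := ⟨0, hp.pos⟩ with hi0
  refine ⟨fun x _ hx => hfinj (by simpa using hx), ?_, ?_⟩
  · intro y hψy hgy
    obtain ⟨x, hx⟩ := (hexact y).mp hgy
    obtain ⟨c, hc, _⟩ := hd₁ x
    have hfx : y = ∑ i : Fin p, ((u : R) ^ (i : ℕ)) • φ₂ (f (c i)) := by
      rw [← hx, hc, map_sum]
      exact Finset.sum_congr rfl fun i _ => by rw [map_smul, hfφ]
    have h0 : f (c i0) = 0 := by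
      have := hψ₂ (fun i => f (c i))
      rw [← hfx] at this
      rw [← this, hψy]
    have hc0 : c i0 = 0 := hfinj (by simpa using h0)
    refine ⟨x, ?_, hx⟩
    have := hψ₁ c
    rw [← hc] at this
    rw [this, hc0]
  · intro z hψz
    obtain ⟨y, hy⟩ := hgsurj z
    obtain ⟨c, hc, _⟩ := hd₂ y
    have hgy : z = ∑ i : Fin p, ((u : R) ^ (i : ℕ)) • φ₃ (g (c i)) := by
      rw [← hy, hc, map_sum]
      exact Finset.sum_congr rfl fun i _ => by rw [map_smul, hgφ]
    have hgc0 : g (c i0) = 0 := by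
      have := hψ₃ (fun i => g (c i))
      rw [← hgy] at this
      rw [← this, hψz]
    set c' : Fin p → M₂ := fun i => if i = i0 then 0 else c i with hc'
    have hsum : ∑ i : Fin p, ((u : R) ^ (i : ℕ)) • φ₂ (c' i)
        = y - φ₂ (c i0) := by
      have hdiff : ∀ i : Fin p, ((u : R) ^ (i : ℕ)) • φ₂ (c i)
          - ((u : R) ^ (i : ℕ)) • φ₂ (c' i)
          = if i = i0 then φ₂ (c i0) else 0 := by
        intro i
        by_cases h : i = i0
        · subst h
          simp [hc', hi0]
        · simp [hc', h]
      have := Finset.sum_congr rfl (fun i (_ : i ∈ Finset.univ) => hdiff i)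
      rw [Finset.sum_sub_distrib, Finset.sum_ite_eq' Finset.univ i0
        (fun _ => φ₂ (c i0)), if_pos (Finset.mem_univ i0)] at this
      rw [eq_sub_iff_add_eq, ← this, hc]
      abel
    refine ⟨y - φ₂ (c i0), ?_, ?_⟩
    · have := hψ₂ c'
      rw [hsum] at this
      rw [this]
      simp [hc']
    · rw [map_sub, hy, hgφ, hgc0, map_zero, sub_zero]
end

section
/- Let f : B₁ → B₂ be a continuous linear surjective map of p-adic Banach spaces (Banach spaces over ℚ_p). Then there exists a continuous (not necessarily linear) section s : B₂ → B₁ with f ∘ s = id. -/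
open Filter Topology

/-- Locally constant approximate section of a surjection with norm control,
on an ultrametric space. -/
lemma approx_section {p : ℕ} [Fact p.Prime] {B₁ B₂ : Type*}
    [NormedAddCommGroup B₁] [NormedSpace ℚ_[p] B₁]
    [NormedAddCommGroup B₂] [NormedSpace ℚ_[p] B₂] [IsUltrametricDist B₂]
    (f : B₁ →L[ℚ_[p]] B₂) {C : ℝ} (hC0 : 0 ≤ C)
    (hC : ∀ y : B₂, ∃ x, f x = y ∧ ‖x‖ ≤ C * ‖y‖) {ε : ℝ} (hε : 0 < ε) :
    ∃ g : B₂ → B₁, Continuous g ∧ ∀ y, ‖f (g y) - y‖ ≤ ε ∧ ‖g y‖ ≤ C * max ‖y‖ ε := by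
  -- the equivalence relation "within distance ε"
  let st : Setoid B₂ :=
    ⟨fun a b => ‖a - b‖ ≤ ε, by
      refine ⟨fun a => by simp [hε.le], fun {a b} h => by rwa [norm_sub_rev], ?_⟩
      intro a b c hab hbc
      have := IsUltrametricDist.dist_triangle_max a b c
      simp only [dist_eq_norm] at this
      exact this.trans (max_le hab hbc)⟩
  let rep : B₂ → B₂ := fun z => (Quotient.mk st z).out
  have hrep : ∀ z, ‖rep z - z‖ ≤ ε := by
    intro z
    have : (Quotient.mk st (rep z)) = Quotient.mk st z := Quotient.out_eq _
    exact Quotient.exact this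
  have hrep_eq : ∀ {z z' : B₂}, ‖z' - z‖ ≤ ε → rep z' = rep z := by
    intro z z' h
    have : (Quotient.mk st z') = Quotient.mk st z := Quotient.sound h
    simp only [rep, this]
  choose x hx hxnorm using hC
  refine ⟨fun z => x (rep z), ?_, fun z => ⟨?_, ?_⟩⟩
  · rw [continuous_iff_continuousAt]
    intro z
    apply Filter.EventuallyEq.continuousAt (y := x (rep z))
    filter_upwards [Metric.ball_mem_nhds z hε] with z' hz'
    rw [hrep_eq (le_of_lt (by simpa [dist_eq_norm] using hz'))]
  · rw [hx]; exact hrep z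
  · refine (hxnorm _).trans (mul_le_mul_of_nonneg_left ?_ hC0)
    calc ‖rep z‖ = ‖z + (rep z - z)‖ := by congr 1; abel
      _ ≤ max ‖z‖ ‖rep z - z‖ := IsUltrametricDist.norm_add_le_max _ _
      _ ≤ max ‖z‖ ε := max_le_max le_rfl (hrep z)

/-- Every continuous linear surjection of `p`-adic Banach spaces admits a
continuous (not necessarily linear) section. -/
theorem stmt_3 {p : ℕ} [Fact p.Prime] {B₁ B₂ : Type*}
    [NormedAddCommGroup B₁] [NormedSpace ℚ_[p] B₁] [CompleteSpace B₁] [IsUltrametricDist B₁]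
    [NormedAddCommGroup B₂] [NormedSpace ℚ_[p] B₂] [CompleteSpace B₂] [IsUltrametricDist B₂]
    (f : B₁ →L[ℚ_[p]] B₂) (hf : Function.Surjective f) :
    ∃ s : B₂ → B₁, Continuous s ∧ ∀ y, f (s y) = y := by
  obtain ⟨C, hC0, hC⟩ := f.exists_preimage_norm_le hf
  -- the invariant
  set Good : ℕ → (B₂ → B₁) → Prop :=
    fun n s => Continuous s ∧ ∀ y, ‖y - f (s y)‖ ≤ (2:ℝ)⁻¹ ^ n with hGoodDef
  have pow_pos : ∀ n : ℕ, (0:ℝ) < (2:ℝ)⁻¹ ^ n := fun n => by positivity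
  have step : ∀ n (s : B₂ → B₁), Good n s →
      ∃ s', Good (n+1) s' ∧ ∀ y, ‖s' y - s y‖ ≤ C * (2:ℝ)⁻¹ ^ n := by
    intro n s ⟨hs_cont, hs_err⟩
    obtain ⟨g, hg_cont, hg⟩ := approx_section f hC0.le hC (pow_pos (n+1))
    refine ⟨fun y => s y + g (y - f (s y)), ⟨?_, ?_⟩, ?_⟩
    · exact hs_cont.add (hg_cont.comp (continuous_id.sub (f.continuous.comp hs_cont)))
    · intro y
      have := (hg (y - f (s y))).1
      calc ‖y - f (s y + g (y - f (s y)))‖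
          = ‖f (g (y - f (s y))) - (y - f (s y))‖ := by
            rw [map_add, norm_sub_rev]; congr 1; abel
        _ ≤ (2:ℝ)⁻¹ ^ (n+1) := this
    · intro y
      have h2 := (hg (y - f (s y))).2
      have : ‖s y + g (y - f (s y)) - s y‖ = ‖g (y - f (s y))‖ := by congr 1; abel
      rw [this]
      refine h2.trans (mul_le_mul_of_nonneg_left ?_ hC0.le)
      refine max_le ((hs_err y).trans ?_) ?_
      · exact le_rfl
      · exact pow_le_pow_of_le_one (by norm_num) (by norm_num) (Nat.le_succ n)
  -- base case
  obtain ⟨g₀, hg₀_cont, hg₀⟩ := approx_section f hC0.le hC (pow_pos 0)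
  have base : Good 0 g₀ := by
    refine ⟨hg₀_cont, fun y => ?_⟩
    rw [norm_sub_rev]
    exact (hg₀ y).1
  choose! F hF1 hF2 using step
  set S : ℕ → B₂ → B₁ := fun n => Nat.rec g₀ (fun n s => F n s) n with hS
  have hGood : ∀ n, Good n (S n) := by
    intro n; induction n with
    | zero => exact base
    | succ n ih => exact hF1 n (S n) ih
  have hdiff : ∀ n y, ‖S (n+1) y - S n y‖ ≤ C * (2:ℝ)⁻¹ ^ n :=
    fun n y => hF2 n (S n) (hGood n) y
  have cs : ∀ y, CauchySeq (fun n => S n y) := by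
    intro y
    apply cauchySeq_of_le_geometric (2:ℝ)⁻¹ C (by norm_num)
    intro n
    rw [dist_eq_norm, norm_sub_rev]
    exact hdiff n y
  have hconv : ∀ y, ∃ l, Tendsto (fun n => S n y) atTop (𝓝 l) :=
    fun y => cauchySeq_tendsto_of_complete (cs y)
  choose s hs using hconv
  have hbound : ∀ n y, dist (S n y) (s y) ≤ C * (2:ℝ)⁻¹ ^ n / (1 - 2⁻¹) := by
    intro n y
    refine dist_le_of_le_geometric_of_tendsto (2:ℝ)⁻¹ C (by norm_num) ?_ (hs y) n
    intro m
    rw [dist_eq_norm, norm_sub_rev]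
    exact hdiff m y
  refine ⟨s, ?_, ?_⟩
  · have hTU : TendstoUniformly S s atTop := by
      rw [Metric.tendstoUniformly_iff]
      intro ε hε
      have hlim : Tendsto (fun n : ℕ => C * (2:ℝ)⁻¹ ^ n / (1 - 2⁻¹)) atTop (𝓝 0) := by
        have : Tendsto (fun n : ℕ => (2:ℝ)⁻¹ ^ n) atTop (𝓝 0) :=
          tendsto_pow_atTop_nhds_zero_of_lt_one (by norm_num) (by norm_num)
        have := (this.const_mul C).div_const (1 - 2⁻¹)
        simpa using this
      filter_upwards [hlim.eventually (gt_mem_nhds hε)] with n hn y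
      rw [dist_comm]
      exact lt_of_le_of_lt (hbound n y) hn
    exact hTU.continuous (Filter.Eventually.of_forall fun n => (hGood n).1).frequently
  · intro y
    have h1 : Tendsto (fun n => f (S n y)) atTop (𝓝 (f (s y))) :=
      (f.continuous.tendsto _).comp (hs y)
    have h2 : Tendsto (fun n => f (S n y)) atTop (𝓝 y) := by
      rw [tendsto_iff_norm_sub_tendsto_zero]
      refine squeeze_zero (g := fun n : ℕ => (2:ℝ)⁻¹ ^ n) (fun n => norm_nonneg _)
        (fun n => by rw [norm_sub_rev]; exact (hGood n).2 y) ?_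
      exact tendsto_pow_atTop_nhds_zero_of_lt_one (by norm_num) (by norm_num)
    exact tendsto_nhds_unique h1 h2
end

section
/- Let D be a K₀-vector space with bijective φ and nilpotent N satisfying Nφ = pφN, and suppose all eigenvalues of φ (over an algebraic closure) avoid 1 and p^{-1}: i.e. 1−φ is bijective on D^{N=0} and φ − p^{-1} is injective on D/ND. Then H⁰(𝔠) = 0 and H¹(𝔠) = 0 for the complex 𝔠 of the previous statement. -/
/-- Let `D` be a `K₀`-vector space with bijective `φ` and nilpotent `N`
satisfying `Nφ = pφN`.  If `1 − φ` is bijective on `D^{N=0}` and `φ − p⁻¹` is injective on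
`D/ND` (equivalently `1 − pφ` is injective on `D/ND`), then `H⁰(𝔠) = 0` and `H¹(𝔠) = 0` for
the complex `𝔠 : D → D ⊕ D → D`, `δ₀(ν) = (Nν, (1−φ)ν)`, `δ₁(λ,μ) = Nμ − (1−pφ)λ`. -/
theorem stmt_7 {K₀ : Type*} [Field K₀] {D : Type*} [AddCommGroup D] [Module K₀ D]
    (p : ℕ) (hp : p.Prime) (N φ : D →ₗ[K₀] D)
    (hφbij : Function.Bijective φ) (hNnil : ∃ k : ℕ, N ^ k = 0)
    (hrel : ∀ x : D, N (φ x) = (p : K₀) • φ (N x))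
    -- `1 − φ` is bijective on `D^{N=0}`
    (h1φinj : ∀ x : D, N x = 0 → x - φ x = 0 → x = 0)
    (h1φsurj : ∀ y : D, N y = 0 → ∃ x : D, N x = 0 ∧ x - φ x = y)
    -- `φ − p⁻¹` is injective on `D/ND`, i.e. `1 − pφ` is injective on `D/ND`
    (hquotinj : ∀ l : D, (∃ z : D, l - (p : K₀) • φ l = N z) → ∃ z : D, l = N z) :
    -- `H⁰(𝔠) = 0`
    (∀ x : D, N x = 0 → φ x = x → x = 0) ∧
    -- `H¹(𝔠) = 0`: every 1-cocycle `(λ, μ)` is a coboundary `δ₀(ν)`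
    (∀ l m : D, N m = l - (p : K₀) • φ l → ∃ ν : D, N ν = l ∧ ν - φ ν = m) := by
  constructor
  · intro x hN hfix
    exact h1φinj x hN (by rw [hfix, sub_self])
  · intro l m hcoc
    obtain ⟨z, hz⟩ := hquotinj l ⟨m, hcoc.symm⟩
    have hNφz : N (φ z) = (p : K₀) • φ l := by rw [hrel, ← hz]
    have hy : N (m - z + φ z) = 0 := by
      simp only [map_add, map_sub, hcoc, hNφz, ← hz]
      abel
    obtain ⟨x, hxN, hxφ⟩ := h1φsurj _ hy
    refine ⟨z + x, ?_, ?_⟩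
    · rw [map_add, hxN, add_zero, hz]
    · have : z + x - φ (z + x) = (z - φ z) + (x - φ x) := by rw [map_add]; abel
      rw [this, hxφ]; abel
end

section
/- Let D be an abelian group with surjective endomorphism (φ−1) : D' → D where D' ⊇ D is a larger group, and let γ act on everything commuting with φ. Suppose for x ∈ D there is b ∈ D' with (φ−1)b = x. Then the assignment (x,y) ↦ (σ ↦ ((σ−1)/(γ−1))·y − (σ−1)b), for (x,y) satisfying the Herr cocycle condition (γ−1)x = (φ−1)y and σ ranging over a group G surjecting onto ⟨γ⟩ with kernel acting trivially on D, defines a 1-cocycle of G with values in D'^{φ=1}, i.e. its values are killed by φ−1, and its class is independent of the choice of b modulo coboundaries. -/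
namespace Stmt19

variable {D' : Type*} [AddCommGroup D']

/-- The cocycle `σ ↦ (σ−1)/(γ−1)·y − (σ−1)b` for `σ = γ^m`:
`c m = Σ_{i<m} γ^i y − (γ^m b − b)`. -/
def coc (γ : D' →+ D') (y b : D') (m : ℕ) : D' :=
  (∑ i ∈ Finset.range m, (⇑γ)^[i] y) - ((⇑γ)^[m] b - b)

lemma it_comm (φ γ : D' →+ D') (hcomm : ∀ z : D', φ (γ z) = γ (φ z)) :
    ∀ (i : ℕ) (z : D'), φ ((⇑γ)^[i] z) = (⇑γ)^[i] (φ z) := by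
  intro i
  induction i with
  | zero => intro z; simp
  | succ n ih =>
    intro z
    rw [Function.iterate_succ_apply, ih (γ z), hcomm, ← Function.iterate_succ_apply]

lemma it_sum (γ : D' →+ D') (m : ℕ) (s : Finset ℕ) (f : ℕ → D') :
    (⇑γ)^[m] (∑ i ∈ s, f i) = ∑ i ∈ s, (⇑γ)^[m] (f i) := by
  induction m with
  | zero => simp
  | succ n ih => simp only [Function.iterate_succ_apply', ih, map_sum]

lemma it_sub (γ : D' →+ D') (m : ℕ) (a c : D') :
    (⇑γ)^[m] (a - c) = (⇑γ)^[m] a - (⇑γ)^[m] c := by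
  induction m with
  | zero => simp
  | succ n ih => simp only [Function.iterate_succ_apply', ih, map_sub]

/-- Suppose `φ` and `γ` are commuting additive operators, `(γ−1)x = (φ−1)y`
(the Herr cocycle condition), and `(φ−1)b = x`.  Then `c : σ = γ^m ↦ (σ−1)/(γ−1)·y − (σ−1)b`
(with `(σ−1)/(γ−1) = Σ_{i<m} γ^i`) is a 1-cocycle with values in `D'^{φ=1}` — its values
are killed by `φ−1` and `c_{στ} = σ c_τ + c_σ` — and its class is independent of the
choice of `b` modulo coboundaries with values in `D'^{φ=1}`. -/
theorem stmt_19 (φ γ : D' →+ D') (hcomm : ∀ z : D', φ (γ z) = γ (φ z))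
    (x y b b' : D')
    (hcoc : γ x - x = φ y - y) (hb : φ b - b = x) (hb' : φ b' - b' = x) :
    -- the values lie in D'^{φ=1}
    (∀ m : ℕ, φ (coc γ y b m) = coc γ y b m) ∧
    -- the 1-cocycle condition c_{στ} = σ c_τ + c_σ  (σ = γ^m, τ = γ^{m'})
    (∀ m m' : ℕ, coc γ y b (m + m') = (⇑γ)^[m] (coc γ y b m') + coc γ y b m) ∧
    -- independence of b: a different choice changes c by the coboundary of b'−b ∈ D'^{φ=1}
    (φ (b' - b) = b' - b ∧
      ∀ m : ℕ, coc γ y b m - coc γ y b' m = (⇑γ)^[m] (b' - b) - (b' - b)) := by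
  have key : ∀ m : ℕ,
      (∑ i ∈ Finset.range m, (⇑γ)^[i] (φ y)) - (∑ i ∈ Finset.range m, (⇑γ)^[i] y)
        = (⇑γ)^[m] x - x := by
    intro m
    induction m with
    | zero => simp
    | succ n ih =>
      rw [Finset.sum_range_succ, Finset.sum_range_succ]
      have h1 : (⇑γ)^[n] (φ y) - (⇑γ)^[n] y = (⇑γ)^[n] (γ x) - (⇑γ)^[n] x := by
        rw [← it_sub, ← it_sub, hcoc]
      have e : (∑ i ∈ Finset.range n, (⇑γ)^[i] (φ y)) + (⇑γ)^[n] (φ y)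
          - ((∑ i ∈ Finset.range n, (⇑γ)^[i] y) + (⇑γ)^[n] y)
          = ((∑ i ∈ Finset.range n, (⇑γ)^[i] (φ y)) - ∑ i ∈ Finset.range n, (⇑γ)^[i] y)
            + ((⇑γ)^[n] (φ y) - (⇑γ)^[n] y) := by abel
      rw [e, ih, h1, Function.iterate_succ_apply]
      abel
  refine ⟨?_, ?_, ?_, ?_⟩
  · intro m
    unfold coc
    rw [map_sub, map_sub, map_sum]
    simp only [it_comm φ γ hcomm]
    rw [sub_eq_sub_iff_sub_eq_sub, key m]
    have h2 : (⇑γ)^[m] (φ b) - φ b - ((⇑γ)^[m] b - b) = (⇑γ)^[m] x - x := by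
      rw [← hb, it_sub]
      abel
    exact h2.symm
  · intro m m'
    unfold coc
    rw [Finset.sum_range_add, it_sub, it_sum]
    simp only [Function.iterate_add_apply, it_sub]
    abel
  · rw [map_sub]
    rw [sub_eq_sub_iff_sub_eq_sub, hb, hb']
  · intro m
    unfold coc
    rw [it_sub]
    abel

end Stmt19
end
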